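/- With P, Q, S, g, and the centered matrices P*, Q* as above, ∑_{i=1}^n ∑_{j=1}^m p*_{i,j} q*_{i,j} ≥ (1/2)·(‖Q‖_F² − (g/n)·‖P‖_F²). -/
import Mathlib


/-- Sum of all entries of an `n × m` real matrix. -/
noncomputable def entSum (n m : ℕ) (P : Fin n → Fin m → ℝ) : ℝ := ∑ i, ∑ j, P i j

/-- The centered matrix `P* = P − (A(P)/(nm))·E`, `E` the all-ones matrix. -/
noncomputable def star (n m : ℕ) (P : Fin n → Fin m → ℝ) : Fin n → Fin m → ℝ :=
  fun i j => P i j - entSum n m P / ((n : ℝ) * m)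

/-- The zero-padded matrix keeping only the rows of `P` indexed by `S`. -/
noncomputable def rowRestrict (n m : ℕ) (P : Fin n → Fin m → ℝ) (S : Finset (Fin n)) :
    Fin n → Fin m → ℝ :=
  fun i j => if i ∈ S then P i j else 0

/-- Theorem 3: `⟨P*, Q*⟩_F ≥ (1/2)·(‖Q‖_F² − (g/n)·‖P‖_F²)` where `Q` keeps the rows
of `P` indexed by `S` (with `|S| = g`) and zeroes the others. -/
theorem inner_star_ge (n m : ℕ) (hn : 0 < n) (hm : 0 < m) (P : Fin n → Fin m → ℝ)
    (S : Finset (Fin n)) (g : ℕ) (hg : S.card = g) :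
    (1 / 2) * ((∑ i, ∑ j, (rowRestrict n m P S i j) ^ 2) -
        ((g : ℝ) / n) * ∑ i, ∑ j, (P i j) ^ 2) ≤
      ∑ i, ∑ j, star n m P i j * star n m (rowRestrict n m P S) i j := by
  
  set Q := rowRestrict n m P S with hQ
  set A := entSum n m P with hA
  set B := entSum n m Q with hB
  set SP := ∑ i, ∑ j, (P i j) ^ 2 with hSP
  set SQ := ∑ i, ∑ j, (Q i j) ^ 2 with hSQ
  have hnm : (0:ℝ) < (n:ℝ) * m := by positivity
  have hPQ : ∀ i j, P i j * Q i j = Q i j ^ 2 := by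
    intro i j
    simp only [hQ, rowRestrict]
    split <;> ring
  have hrhs : ∑ i, ∑ j, star n m P i j * star n m Q i j = SQ - A * B / ((n:ℝ)*m) := by
    have hexp : ∀ i j, star n m P i j * star n m Q i j =
        Q i j ^ 2 - (A/((n:ℝ)*m)) * Q i j - (B/((n:ℝ)*m)) * P i j
          + (A/((n:ℝ)*m)) * (B/((n:ℝ)*m)) := by
      intro i j
      show (P i j - entSum n m P / ((n:ℝ)*m)) * (Q i j - entSum n m Q / ((n:ℝ)*m)) = _
      rw [← hA, ← hB, ← hPQ i j]; ring
    simp only [hexp, Finset.sum_add_distrib, Finset.sum_sub_distrib, ← Finset.mul_sum]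
    rw [← hSQ]
    have hcB : ∑ i : Fin n, ∑ j : Fin m, Q i j = B := rfl
    have hcA : ∑ i : Fin n, ∑ j : Fin m, P i j = A := rfl
    rw [hcB, hcA]
    simp only [Finset.sum_const, Finset.card_univ, Fintype.card_fin, nsmul_eq_mul]
    field_simp
    ring
  have hSPnn : 0 ≤ SP := by positivity
  have hSQnn : 0 ≤ SQ := by positivity
  have hCSA : A ^ 2 ≤ (n:ℝ) * m * SP := by
    have h := sq_sum_le_card_mul_sum_sq (s := (Finset.univ : Finset (Fin n × Fin m)))
      (f := fun p => P p.1 p.2)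
    simpa [hA, entSum, ← Finset.sum_product', Finset.card_univ, mul_assoc, hSP] using h
  have hBe : B = ∑ p ∈ S ×ˢ (Finset.univ : Finset (Fin m)), P p.1 p.2 := by
    rw [hB, entSum, Finset.sum_product]
    rw [← Finset.sum_subset (Finset.subset_univ S)
      (fun i _ hi => by simp [hQ, rowRestrict, hi])]
    exact Finset.sum_congr rfl fun i hi =>
      Finset.sum_congr rfl fun j _ => by simp [hQ, rowRestrict, hi]
  have hSQe : SQ = ∑ p ∈ S ×ˢ (Finset.univ : Finset (Fin m)), P p.1 p.2 ^ 2 := by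
    rw [hSQ, Finset.sum_product]
    rw [← Finset.sum_subset (Finset.subset_univ S)
      (fun i _ hi => by simp [hQ, rowRestrict, hi])]
    exact Finset.sum_congr rfl fun i hi =>
      Finset.sum_congr rfl fun j _ => by simp [hQ, rowRestrict, hi]
  have hCSB : B ^ 2 ≤ (g:ℝ) * m * SQ := by
    have h := sq_sum_le_card_mul_sum_sq (s := S ×ˢ (Finset.univ : Finset (Fin m)))
      (f := fun p => P p.1 p.2)
    rw [← hBe, ← hSQe] at h
    simpa [Finset.card_product, hg] using h
  clear_value Q A B SP SQ
  have key : A * B ≤ ((n:ℝ)*m/2) * SQ + ((g:ℝ)*m/2) * SP := by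
    rcases Nat.eq_zero_or_pos g with hg0 | hg0
    · subst hg0
      have hB0 : B = 0 := by
        have : B ^ 2 ≤ 0 := by simpa using hCSB
        nlinarith [sq_nonneg B]
      rw [hB0]
      simp only [mul_zero, Nat.cast_zero, zero_mul]
      positivity
    · have hg' : (0:ℝ) < g := by exact_mod_cast hg0
      have hn' : (0:ℝ) < n := by exact_mod_cast hn
      have h1 : (g:ℝ)^2 * A^2 ≤ (g:ℝ)^2 * ((n:ℝ)*m*SP) :=
        mul_le_mul_of_nonneg_left hCSA (sq_nonneg _)
      have h2 : (n:ℝ)^2 * B^2 ≤ (n:ℝ)^2 * ((g:ℝ)*m*SQ) :=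
        mul_le_mul_of_nonneg_left hCSB (sq_nonneg _)
      have h3 : (2*(g:ℝ)*n) * (A*B) ≤ (g:ℝ)^2*A^2 + (n:ℝ)^2*B^2 := by
        nlinarith [sq_nonneg ((g:ℝ)*A - (n:ℝ)*B)]
      have h5 : (g:ℝ)^2*((n:ℝ)*m*SP) + (n:ℝ)^2*((g:ℝ)*m*SQ) =
          (2*(g:ℝ)*n) * (((n:ℝ)*m/2)*SQ + ((g:ℝ)*m/2)*SP) := by ring
      have h6 : (0:ℝ) < 2*(g:ℝ)*n := by positivity
      have h7 : (2*(g:ℝ)*n) * (A*B) ≤ (2*(g:ℝ)*n) * (((n:ℝ)*m/2)*SQ + ((g:ℝ)*m/2)*SP) := by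
        calc (2*(g:ℝ)*n) * (A*B) ≤ (g:ℝ)^2*A^2 + (n:ℝ)^2*B^2 := h3
        _ ≤ (g:ℝ)^2*((n:ℝ)*m*SP) + (n:ℝ)^2*((g:ℝ)*m*SQ) := add_le_add h1 h2
        _ = _ := h5
      exact le_of_mul_le_mul_left h7 h6
  rw [hrhs, ← sub_nonneg]
  have heq : SQ - A*B/((n:ℝ)*m) - (1/2)*(SQ - ((g:ℝ)/n)*SP) =
      (1/((n:ℝ)*m)) * (((n:ℝ)*m/2)*SQ + ((g:ℝ)*m/2)*SP - A*B) := by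
    field_simp
    ring
  rw [heq]
  apply mul_nonneg (by positivity)
  linarith [key]
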